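/- Fix t ∈ ℝ and set h s = ⟪γ s, n s⟫ and Δ = det(n t, deriv n t, iteratedDeriv 2 n t). Assume Δ ≠ 0 and let x ∈ E be the unique point satisfying ⟪x, n t⟫ = h t, ⟪x, deriv n t⟫ = deriv h t, ⟪x, iteratedDeriv 2 n t⟫ = iteratedDeriv 2 h t. Then the distance from the boundary point γ t to the corresponding point x of the singular locus of the boundary-envelope is ‖x − γ t‖ = |κ2 t| · Real.sqrt ((κ2 t)^2 + (κ3 t)^2) / |κ2 t · (deriv κ3 t + κ1 t · κ2 t) + κ3 t · (κ1 t · κ3 t − deriv κ2 t)|. -/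

import Mathlib

open scoped RealInnerProductSpace

noncomputable def cross3 (u v : EuclideanSpace ℝ (Fin 3)) : EuclideanSpace ℝ (Fin 3) :=
  (WithLp.equiv 2 (Fin 3 → ℝ)).symm
    ![u 1 * v 2 - u 2 * v 1, u 2 * v 0 - u 0 * v 2, u 0 * v 1 - u 1 * v 0]

noncomputable def det3 (u v w : EuclideanSpace ℝ (Fin 3)) : ℝ :=
  Matrix.det (Matrix.of (fun i j => ![u, v, w] j i))

lemma det3_comb (u v w : EuclideanSpace ℝ (Fin 3)) (a1 b1 c1 a2 b2 c2 a3 b3 c3 : ℝ) :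
    det3 (a1•u+b1•v+c1•w) (a2•u+b2•v+c2•w) (a3•u+b3•v+c3•w)
      = Matrix.det !![a1,a2,a3;b1,b2,b3;c1,c2,c3] * det3 u v w := by
  simp only [det3, Matrix.det_fin_three, Matrix.of_apply, Matrix.cons_val', Matrix.cons_val_zero,
    Matrix.cons_val_one, Matrix.head_cons, Matrix.empty_val', Matrix.cons_val_fin_one,
    Matrix.head_fin_const, Matrix.cons_val_two, Matrix.tail_cons, PiLp.add_apply, PiLp.smul_apply,
    smul_eq_mul]
  ring

lemma det3_cross (u v : EuclideanSpace ℝ (Fin 3)) :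
    det3 u v (cross3 u v) = ⟪cross3 u v, cross3 u v⟫ := by
  simp only [det3, cross3, Matrix.det_fin_three, Matrix.of_apply, Matrix.cons_val', Matrix.cons_val_zero,
    Matrix.cons_val_one, Matrix.head_cons, Matrix.empty_val', Matrix.cons_val_fin_one,
    Matrix.head_fin_const, Matrix.cons_val_two, Matrix.tail_cons, PiLp.inner_apply,
    RCLike.inner_apply, conj_trivial, Fin.sum_univ_three, WithLp.equiv_symm_apply, PiLp.toLp_apply]
  ring

theorem stmt10
    (γ e1 e2 e3 : ℝ → EuclideanSpace ℝ (Fin 3)) (κ1 κ2 κ3 : ℝ → ℝ)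
    (hγ : ContDiff ℝ (⊤ : ℕ∞) γ)
    (he1s : ContDiff ℝ (⊤ : ℕ∞) e1) (he2s : ContDiff ℝ (⊤ : ℕ∞) e2)
    (he3s : ContDiff ℝ (⊤ : ℕ∞) e3)
    (hκ1s : ContDiff ℝ (⊤ : ℕ∞) κ1) (hκ2s : ContDiff ℝ (⊤ : ℕ∞) κ2)
    (hκ3s : ContDiff ℝ (⊤ : ℕ∞) κ3)
    (he1 : e1 = deriv γ)
    (hON : ∀ t, Orthonormal ℝ ![e1 t, e2 t, e3 t])
    (hor : ∀ t, e3 t = cross3 (e1 t) (e2 t))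
    (hE1 : ∀ t, deriv e1 t = κ1 t • e2 t + κ2 t • e3 t)
    (hE2 : ∀ t, deriv e2 t = (-(κ1 t)) • e1 t + κ3 t • e3 t)
    (hE3 : ∀ t, deriv e3 t = (-(κ2 t)) • e1 t - κ3 t • e2 t)
    (t : ℝ)
    (hΔ : det3 (e3 t) (deriv e3 t) (iteratedDeriv 2 e3 t) ≠ 0)
    (x : EuclideanSpace ℝ (Fin 3))
    (hx1 : ⟪x, e3 t⟫ = ⟪γ t, e3 t⟫)
    (hx2 : ⟪x, deriv e3 t⟫ = deriv (fun s => ⟪γ s, e3 s⟫) t)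
    (hx3 : ⟪x, iteratedDeriv 2 e3 t⟫ = iteratedDeriv 2 (fun s => ⟪γ s, e3 s⟫) t) :
    ‖x - γ t‖ = |κ2 t| * Real.sqrt ((κ2 t)^2 + (κ3 t)^2)
      / |κ2 t * (deriv κ3 t + κ1 t * κ2 t) + κ3 t * (κ1 t * κ3 t - deriv κ2 t)| := by
  have hdγ : Differentiable ℝ γ := hγ.differentiable (by simp)
  have hde1 : Differentiable ℝ e1 := he1s.differentiable (by simp)
  have hde2 : Differentiable ℝ e2 := he2s.differentiable (by simp)
  have hde3 : Differentiable ℝ e3 := he3s.differentiable (by simp)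
  have hdκ2 : Differentiable ℝ κ2 := hκ2s.differentiable (by simp)
  have hdκ3 : Differentiable ℝ κ3 := hκ3s.differentiable (by simp)
  -- orthonormality facts
  have hin : ∀ s, ∀ i j : Fin 3,
      ⟪(![e1 s, e2 s, e3 s]) i, (![e1 s, e2 s, e3 s]) j⟫ = if i = j then 1 else 0 :=
    fun s => orthonormal_iff_ite.mp (hON s)
  have h11 : ⟪e1 t, e1 t⟫ = 1 := by simpa using hin t 0 0
  have h22 : ⟪e2 t, e2 t⟫ = 1 := by simpa using hin t 1 1
  have h33 : ⟪e3 t, e3 t⟫ = 1 := by simpa using hin t 2 2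
  have h12 : ⟪e1 t, e2 t⟫ = 0 := by simpa using hin t 0 1
  have h13 : ⟪e1 t, e3 t⟫ = 0 := by simpa using hin t 0 2
  have h23 : ⟪e2 t, e3 t⟫ = 0 := by simpa using hin t 1 2
  -- second derivative of e3
  have HW' : ∀ s, HasDerivAt (fun r => (-(κ2 r)) • e1 r - κ3 r • e2 r)
      (((-(κ2 s)) • deriv e1 s + (-(deriv κ2 s)) • e1 s)
        - (κ3 s • deriv e2 s + deriv κ3 s • e2 s)) s := by
    intro s
    exact (((hdκ2 s).hasDerivAt.neg.smul (hde1 s).hasDerivAt)).sub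
      ((hdκ3 s).hasDerivAt.smul (hde2 s).hasDerivAt)
  have hde3fun : deriv e3 = fun s => (-(κ2 s)) • e1 s - κ3 s • e2 s := funext hE3
  have hW'' : iteratedDeriv 2 e3 t
      = (κ1 t * κ3 t - deriv κ2 t) • e1 t + (-(κ1 t * κ2 t) - deriv κ3 t) • e2 t
        + (-((κ2 t)^2 + (κ3 t)^2)) • e3 t := by
    rw [show (2:ℕ) = 1 + 1 from rfl, iteratedDeriv_succ, iteratedDeriv_one, hde3fun,
      (HW' t).deriv, hE1 t, hE2 t]
    module
  -- first derivative of h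
  have hh' : deriv (fun s => ⟪γ s, e3 s⟫) = fun s => ⟪γ s, deriv e3 s⟫ := by
    funext s
    rw [deriv_inner_apply ℝ (hdγ s) (hde3 s), ← he1]
    have : ⟪e1 s, e3 s⟫ = 0 := by simpa using hin s 0 2
    rw [this, add_zero]
  -- second derivative of h
  have hh'' : iteratedDeriv 2 (fun s => ⟪γ s, e3 s⟫) t
      = ⟪γ t, iteratedDeriv 2 e3 t⟫ - κ2 t := by
    rw [show (2:ℕ) = 1 + 1 from rfl, iteratedDeriv_succ, iteratedDeriv_one, hh']
    have hγd : HasDerivAt γ (e1 t) t := by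
      have := (hdγ t).hasDerivAt; rwa [← he1] at this
    have := (hγd.inner ℝ (HW' t)).deriv
    simp only [hde3fun]
    rw [this]
    have h2 : iteratedDeriv 2 e3 t = ((-(κ2 t)) • deriv e1 t + (-(deriv κ2 t)) • e1 t)
        - (κ3 t • deriv e2 t + deriv κ3 t • e2 t) := by
      rw [show (2:ℕ) = 1 + 1 from rfl, iteratedDeriv_succ, iteratedDeriv_one, hde3fun,
        (HW' t).deriv]
    rw [← h2]
    have : ⟪e1 t, (-(κ2 t)) • e1 t - κ3 t • e2 t⟫ = -(κ2 t) := by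
      rw [inner_sub_right, real_inner_smul_right, real_inner_smul_right, h11, h12]; ring
    rw [this]; ring

  -- the point y and its coordinates
  set y : EuclideanSpace ℝ (Fin 3) := x - γ t with hy_def
  set a : ℝ := ⟪y, e1 t⟫ with ha_def
  set b : ℝ := ⟪y, e2 t⟫ with hb_def
  set c : ℝ := ⟪y, e3 t⟫ with hc_def
  have Ec : c = 0 := by
    rw [hc_def, hy_def, inner_sub_left, hx1, sub_self]
  have E2 : -(κ2 t) * a - κ3 t * b = 0 := by
    have : ⟪y, deriv e3 t⟫ = 0 := by
      rw [hy_def, inner_sub_left, hx2, hh']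
      simp
    rw [hE3 t, inner_sub_right, real_inner_smul_right, real_inner_smul_right] at this
    rw [ha_def, hb_def]
    linarith [this]
  have E3 : (κ1 t * κ3 t - deriv κ2 t) * a + (-(κ1 t * κ2 t) - deriv κ3 t) * b
      + (-((κ2 t)^2 + (κ3 t)^2)) * c = -(κ2 t) := by
    have : ⟪y, iteratedDeriv 2 e3 t⟫ = -(κ2 t) := by
      rw [hy_def, inner_sub_left, hx3, hh'']
      ring
    rw [hW'', inner_add_right, inner_add_right, real_inner_smul_right, real_inner_smul_right,
      real_inner_smul_right] at this
    rw [ha_def, hb_def, hc_def]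
    linarith [this]
  -- Δ = D
  set D : ℝ := κ2 t * (deriv κ3 t + κ1 t * κ2 t) + κ3 t * (κ1 t * κ3 t - deriv κ2 t) with hD_def
  have hdet1 : det3 (e1 t) (e2 t) (e3 t) = 1 := by
    rw [show e3 t = cross3 (e1 t) (e2 t) from hor t] at h33 ⊢
    rw [det3_cross, h33]
  have hΔD : D ≠ 0 := by
    intro h0
    apply hΔ
    have hc1 : e3 t = (0:ℝ) • e1 t + (0:ℝ) • e2 t + (1:ℝ) • e3 t := by module
    have hc2 : deriv e3 t = (-(κ2 t)) • e1 t + (-(κ3 t)) • e2 t + (0:ℝ) • e3 t := by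
      rw [hE3 t]; module
    have hc3 : iteratedDeriv 2 e3 t = (κ1 t * κ3 t - deriv κ2 t) • e1 t
        + (-(κ1 t * κ2 t) - deriv κ3 t) • e2 t + (-((κ2 t)^2 + (κ3 t)^2)) • e3 t := hW''
    rw [hc1, hc2, hc3, det3_comb, hdet1, mul_one]
    rw [hD_def] at h0
    simp only [Matrix.det_fin_three, Matrix.of_apply, Matrix.cons_val', Matrix.cons_val_zero, Matrix.cons_val_one,
      Matrix.head_cons, Matrix.empty_val', Matrix.cons_val_fin_one, Matrix.head_fin_const,
      Matrix.cons_val_two, Matrix.tail_cons]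
    linear_combination h0
  -- express y in the orthonormal basis
  have hcard : Fintype.card (Fin 3) = Module.finrank ℝ (EuclideanSpace ℝ (Fin 3)) := by simp
  have hyrep : y = a • e1 t + b • e2 t + c • e3 t := by
    set B := basisOfOrthonormalOfCardEqFinrank (hON t) hcard with hB
    have hBcoe : ⇑B = ![e1 t, e2 t, e3 t] := coe_basisOfOrthonormalOfCardEqFinrank _ _
    have hOB : Orthonormal ℝ ⇑B := by rw [hBcoe]; exact hON t
    set OB := B.toOrthonormalBasis hOB with hOBdef
    have hOBcoe : ⇑OB = ![e1 t, e2 t, e3 t] := by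
      rw [hOBdef, Module.Basis.coe_toOrthonormalBasis, hBcoe]
    have H := (OB.sum_repr y).symm
    rw [Fin.sum_univ_three] at H
    simp only [OB.repr_apply_apply, hOBcoe, Matrix.cons_val_zero, Matrix.cons_val_one,
      Matrix.head_cons, Matrix.cons_val_two, Matrix.tail_cons] at H
    have haux1 : (inner ℝ (e1 t) y : ℝ) = a := by rw [ha_def]; exact real_inner_comm _ _
    have haux2 : (inner ℝ (e2 t) y : ℝ) = b := by rw [hb_def]; exact real_inner_comm _ _
    have haux3 : (inner ℝ (e3 t) y : ℝ) = c := by rw [hc_def]; exact real_inner_comm _ _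
    rw [haux1, haux2, haux3] at H
    exact H
  -- norm squared
  have hnorm2 : ‖y‖^2 = a^2 + b^2 + c^2 := by
    rw [← real_inner_self_eq_norm_sq]
    nth_rewrite 1 [hyrep]
    rw [inner_add_left, inner_add_left, real_inner_smul_left, real_inner_smul_left,
      real_inner_smul_left]
    have haux1 : (inner ℝ (e1 t) y : ℝ) = a := by rw [ha_def]; exact real_inner_comm _ _
    have haux2 : (inner ℝ (e2 t) y : ℝ) = b := by rw [hb_def]; exact real_inner_comm _ _
    have haux3 : (inner ℝ (e3 t) y : ℝ) = c := by rw [hc_def]; exact real_inner_comm _ _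
    rw [haux1, haux2, haux3]
    ring
  -- solve the linear system
  rw [Ec] at E3
  have ha2 : a * D = -(κ2 t * κ3 t) := by
    rw [hD_def]
    linear_combination (κ3 t) * E3 + (-(κ1 t * κ2 t) - deriv κ3 t) * E2
  have hb2 : b * D = (κ2 t)^2 := by
    rw [hD_def]
    linear_combination (-(κ2 t)) * E3 + (-(κ1 t * κ3 t - deriv κ2 t)) * E2
  -- conclude
  have hrhs_nonneg : (0:ℝ) ≤ |κ2 t| * Real.sqrt ((κ2 t)^2 + (κ3 t)^2) / |D| := by positivity
  have hsq : ‖y‖^2 = (|κ2 t| * Real.sqrt ((κ2 t)^2 + (κ3 t)^2) / |D|)^2 := by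
    rw [hnorm2, div_pow, mul_pow, sq_abs, sq_abs,
      Real.sq_sqrt (by positivity : (0:ℝ) ≤ (κ2 t)^2 + (κ3 t)^2)]
    rw [Ec]
    field_simp
    linear_combination (a * D - κ2 t * κ3 t) * ha2 + (b * D + (κ2 t)^2) * hb2
  calc ‖y‖ = Real.sqrt (‖y‖^2) := (Real.sqrt_sq (norm_nonneg _)).symm
    _ = |κ2 t| * Real.sqrt ((κ2 t)^2 + (κ3 t)^2) / |D| := by
        rw [hsq, Real.sqrt_sq hrhs_nonneg]
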